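/- Suppose f : ℝ^n → ℝ is differentiable, L_f-smooth and μ_f-strongly convex, A ∈ ℝ^{m×n} has minimum singular value σ_min > 0, and h : ℝ^m → ℝ ∪ {+∞} is proper closed convex. Then the dual function Φ(λ) := -f*(-Aᵀλ) - ⟨b,λ⟩ - h*(λ) is (σ_min²/L_f)-strongly concave. -/

import Mathlib

open RealInnerProductSpace Set Filter

section DscAux

variable {E : Type*} [NormedAddCommGroup E] [InnerProductSpace ℝ E] [FiniteDimensional ℝ E]

lemma tangent_le (φ : E → ℝ) (hd : Differentiable ℝ φ) (hc : ConvexOn ℝ Set.univ φ)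
    (x y : E) : φ x + fderiv ℝ φ x (y - x) ≤ φ y := by
  set g : ℝ → ℝ := fun t => φ (x + t • (y - x)) with hgdef
  have hline : ∀ t : ℝ, HasDerivAt (fun t : ℝ => x + t • (y - x)) (y - x) t := by
    intro t
    simpa using ((hasDerivAt_id t).smul_const (y - x)).const_add x
  have hg : ∀ t : ℝ, HasDerivAt g (fderiv ℝ φ (x + t • (y - x)) (y - x)) t := by
    intro t
    exact ((hd _).hasFDerivAt.comp_hasDerivAt t (hline t))
  have h0 : HasDerivAt g (fderiv ℝ φ x (y - x)) 0 := by
    have := hg 0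
    simpa using this
  have hgc : ConvexOn ℝ Set.univ g := by
    refine ⟨convex_univ, ?_⟩
    intro s _ t _ a c ha hc1 hac
    have harg : x + (a * s + c * t) • (y - x)
        = a • (x + s • (y - x)) + c • (x + t • (y - x)) := by
      rw [add_smul, mul_smul, mul_smul, smul_add, smul_add]
      rw [← add_assoc]
      have : a • x + c • x = x := by rw [← add_smul, hac, one_smul]
      rw [show a • x + a • s • (y - x) + (c • x + c • t • (y - x))
          = (a • x + c • x) + (a • s • (y - x) + c • t • (y - x)) by abel, this]
      abel
    have := hc.2 (mem_univ (x + s • (y - x))) (mem_univ (x + t • (y - x))) ha hc1 hac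
    simpa [hgdef, smul_eq_mul, harg] using this
  have hs := hgc.le_slope_of_hasDerivAt (mem_univ 0) (mem_univ 1) one_pos h0
  have hslope : slope g 0 1 = g 1 - g 0 := by
    rw [slope_def_field]; simp
  rw [hslope] at hs
  have hg1 : g 1 = φ y := by simp [hgdef]
  have hg0 : g 0 = φ x := by simp [hgdef]
  rw [hg1, hg0] at hs
  linarith

lemma line_hasDerivAt (f : E → ℝ) (hd : Differentiable ℝ f) (x d : E) (t : ℝ) :
    HasDerivAt (fun t : ℝ => f (x + t • d)) ⟪gradient f (x + t • d), d⟫ t := by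
  have hline : HasDerivAt (fun t : ℝ => x + t • d) d t := by
    simpa using ((hasDerivAt_id t).smul_const d).const_add x
  have hgrad := (hd (x + t • d)).hasGradientAt.hasFDerivAt
  have := hgrad.comp_hasDerivAt t hline
  simpa [InnerProductSpace.toDual_apply_apply, Function.comp_def] using this

lemma descent (f : E → ℝ) (Lf : ℝ) (hLf : 0 < Lf) (hd : Differentiable ℝ f)
    (hsmooth : ∀ x x', ‖gradient f x - gradient f x'‖ ≤ Lf * ‖x - x'‖) (x d : E) :
    f (x + d) ≤ f x + ⟪gradient f x, d⟫ + Lf / 2 * ‖d‖ ^ 2 := by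
  set ψ : ℝ → ℝ := fun t => f (x + t • d) - t * ⟪gradient f x, d⟫ - Lf * t ^ 2 / 2 * ‖d‖ ^ 2
    with hψdef
  have hψ : ∀ t : ℝ, HasDerivAt ψ
      (⟪gradient f (x + t • d), d⟫ - ⟪gradient f x, d⟫ - Lf * t * ‖d‖ ^ 2) t := by
    intro t
    have h1 := line_hasDerivAt f hd x d t
    have h2 : HasDerivAt (fun t : ℝ => t * ⟪gradient f x, d⟫) ⟪gradient f x, d⟫ t := by
      simpa using (hasDerivAt_id t).mul_const ⟪gradient f x, d⟫
    have h3 : HasDerivAt (fun t : ℝ => Lf * t ^ 2 / 2 * ‖d‖ ^ 2) (Lf * t * ‖d‖ ^ 2) t := by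
      have : HasDerivAt (fun t : ℝ => t ^ 2) (2 * t) t := by
        simpa using hasDerivAt_pow 2 t
      have := ((this.const_mul Lf).div_const 2).mul_const (‖d‖ ^ 2)
      exact this.congr_deriv (by ring)
    exact (h1.sub h2).sub h3
  have hmono : AntitoneOn ψ (Icc 0 1) := by
    apply antitoneOn_of_deriv_nonpos (convex_Icc 0 1)
    · exact Continuous.continuousOn
        (continuous_iff_continuousAt.2 fun t => (hψ t).continuousAt)
    · intro t _
      exact (hψ t).differentiableAt.differentiableWithinAt
    · intro t ht
      rw [(hψ t).deriv]
      have ht0 : 0 ≤ t := by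
        have := interior_Icc (a := (0:ℝ)) (b := 1) ▸ ht
        exact le_of_lt this.1
      have hCS : ⟪gradient f (x + t • d) - gradient f x, d⟫ ≤
          ‖gradient f (x + t • d) - gradient f x‖ * ‖d‖ := real_inner_le_norm _ _
      have hlip : ‖gradient f (x + t • d) - gradient f x‖ ≤ Lf * (t * ‖d‖) := by
        have := hsmooth (x + t • d) x
        simpa [norm_smul, abs_of_nonneg ht0] using this
      have : ⟪gradient f (x + t • d), d⟫ - ⟪gradient f x, d⟫ ≤ Lf * t * ‖d‖ ^ 2 := by
        rw [← inner_sub_left]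
        calc ⟪gradient f (x + t • d) - gradient f x, d⟫
            ≤ ‖gradient f (x + t • d) - gradient f x‖ * ‖d‖ := hCS
          _ ≤ Lf * (t * ‖d‖) * ‖d‖ := by
              apply mul_le_mul_of_nonneg_right hlip (norm_nonneg d)
          _ = Lf * t * ‖d‖ ^ 2 := by ring
      linarith
  have h01 := hmono (left_mem_Icc.2 zero_le_one) (right_mem_Icc.2 zero_le_one) zero_le_one
  simp only [hψdef] at h01
  simp only [one_smul, zero_smul, add_zero, one_pow, mul_one, zero_pow, mul_zero, zero_mul,
    sub_zero, one_mul] at h01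
  linarith [h01]

lemma exists_maximizer (f : E → ℝ) (μf : ℝ) (hμf : 0 < μf)
    (hdiff : Differentiable ℝ f)
    (hsc : ConvexOn ℝ Set.univ (fun x => f x - μf / 2 * ‖x‖ ^ 2))
    (fstar : E → ℝ) (hfstar : ∀ y, IsLUB (Set.range fun x => ⟪x, y⟫ - f x) (fstar y))
    (y : E) : ∃ x', gradient f x' = y ∧ fstar y = ⟪x', y⟫ - f x' := by
  set φ : E → ℝ := fun x => f x - μf / 2 * ‖x‖ ^ 2 with hφdef
  have hφd : Differentiable ℝ φ := by
    have hn : Differentiable ℝ (fun x : E => ‖x‖ ^ 2) :=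
      (contDiff_norm_sq ℝ (E := E) (n := 1)).differentiable one_ne_zero
    exact hdiff.sub (hn.const_mul (μf / 2))
  set C : ℝ := ‖fderiv ℝ φ 0‖ + ‖y‖ with hCdef
  set G : E → ℝ := fun x => f x - ⟪y, x⟫ with hGdef
  have hlb : ∀ x, μf / 2 * ‖x‖ ^ 2 - C * ‖x‖ + φ 0 ≤ G x := by
    intro x
    have ht := tangent_le φ hφd hsc 0 x
    have h1 : -(‖fderiv ℝ φ 0‖ * ‖x‖) ≤ fderiv ℝ φ 0 (x - 0) := by
      have := (fderiv ℝ φ 0).le_opNorm (x - 0)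
      rw [sub_zero] at this ⊢
      have habs : |fderiv ℝ φ 0 x| ≤ ‖fderiv ℝ φ 0‖ * ‖x‖ := this
      linarith [neg_abs_le (fderiv ℝ φ 0 x)]
    have h2 : ⟪y, x⟫ ≤ ‖y‖ * ‖x‖ := real_inner_le_norm y x
    have h3 : φ 0 - ‖fderiv ℝ φ 0‖ * ‖x‖ ≤ φ x := by linarith
    have h4 : φ x = f x - μf / 2 * ‖x‖ ^ 2 := rfl
    rw [h4] at h3
    simp only [hGdef, hCdef]
    linarith
  have hq : Tendsto (fun r : ℝ => μf / 2 * r ^ 2 - C * r + φ 0) atTop atTop := by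
    have h1 : Tendsto (fun r : ℝ => μf / 2 * r - C) atTop atTop := by
      have := tendsto_atTop_add_const_right atTop (-C)
        (Tendsto.const_mul_atTop (half_pos hμf) tendsto_id)
      exact this.congr fun r => by simp only [id_eq]; ring
    have h2 : Tendsto (fun r : ℝ => r * (μf / 2 * r - C)) atTop atTop :=
      Tendsto.atTop_mul_atTop₀ tendsto_id h1
    have h3 := tendsto_atTop_add_const_right _ (φ 0) h2
    exact h3.congr (fun r => by ring)
  have hGcont : Continuous G := hdiff.continuous.sub (continuous_const.inner continuous_id)
  have hGcoer : Tendsto G (Filter.cocompact E) atTop := by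
    refine tendsto_atTop_mono hlb ?_
    exact hq.comp tendsto_norm_cocompact_atTop
  obtain ⟨x', hx'⟩ := hGcont.exists_forall_le hGcoer
  have hmin : IsLocalMin G x' := Filter.Eventually.of_forall hx'
  have hG : HasFDerivAt G (InnerProductSpace.toDual ℝ E (gradient f x') - innerSL ℝ y) x' :=
    ((hdiff x').hasGradientAt.hasFDerivAt).sub (innerSL ℝ y).hasFDerivAt
  have hzero := hmin.hasFDerivAt_eq_zero hG
  have hgrad : gradient f x' = y := by
    apply ext_inner_right ℝ
    intro v
    have := congrArg (fun L => L v) hzero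
    simp only [ContinuousLinearMap.sub_apply, ContinuousLinearMap.zero_apply,
      InnerProductSpace.toDual_apply_apply, innerSL_apply_apply] at this
    linarith [this]
  refine ⟨x', hgrad, ?_⟩
  have hub : ∀ v ∈ Set.range (fun x => ⟪x, y⟫ - f x), v ≤ ⟪x', y⟫ - f x' := by
    rintro v ⟨x, rfl⟩
    have := hx' x
    simp only [hGdef] at this
    have hc1 : ⟪y, x'⟫ = ⟪x', y⟫ := real_inner_comm x' y
    have hc2 : ⟪y, x⟫ = ⟪x, y⟫ := real_inner_comm x y
    dsimp only
    linarith
  exact le_antisymm ((hfstar y).2 hub) ((hfstar y).1 ⟨x', rfl⟩)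

lemma strong_subgrad (f : E → ℝ) (Lf μf : ℝ) (hLf : 0 < Lf) (hμf : 0 < μf)
    (hdiff : Differentiable ℝ f)
    (hsmooth : ∀ x x', ‖gradient f x - gradient f x'‖ ≤ Lf * ‖x - x'‖)
    (hsc : ConvexOn ℝ Set.univ (fun x => f x - μf / 2 * ‖x‖ ^ 2))
    (fstar : E → ℝ) (hfstar : ∀ y, IsLUB (Set.range fun x => ⟪x, y⟫ - f x) (fstar y))
    (y' : E) :
    ∃ x', ∀ y, fstar y' + ⟪x', y - y'⟫ + 1 / (2 * Lf) * ‖y - y'‖ ^ 2 ≤ fstar y := by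
  obtain ⟨x', hgrad, hval⟩ := exists_maximizer f μf hμf hdiff hsc fstar hfstar y'
  refine ⟨x', fun y => ?_⟩
  set d : E := (1 / Lf) • (y - y') with hddef
  have h1 : ⟪x' + d, y⟫ - f (x' + d) ≤ fstar y := (hfstar y).1 ⟨x' + d, rfl⟩
  have h2 : f (x' + d) ≤ f x' + ⟪y', d⟫ + Lf / 2 * ‖d‖ ^ 2 := by
    have := descent f Lf hLf hdiff hsmooth x' d
    rwa [hgrad] at this
  have e1 : ⟪x' + d, y⟫ = ⟪x', y⟫ + ⟪d, y⟫ := inner_add_left _ _ _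
  have e2 : ⟪x', y⟫ = ⟪x', y'⟫ + ⟪x', y - y'⟫ := by
    rw [inner_sub_right]; ring
  have e3 : ⟪d, y⟫ - ⟪y', d⟫ = 1 / Lf * ‖y - y'‖ ^ 2 := by
    have hyd : (⟪y', d⟫ : ℝ) = ⟪d, y'⟫ := real_inner_comm d y'
    rw [hyd, ← inner_sub_right, hddef, real_inner_smul_left, real_inner_self_eq_norm_sq]
  have e4 : ‖d‖ ^ 2 = (1 / Lf) ^ 2 * ‖y - y'‖ ^ 2 := by
    rw [hddef, norm_smul]
    rw [Real.norm_eq_abs, abs_of_pos (by positivity)]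
    ring
  have hcoef : 1 / Lf - Lf / 2 * (1 / Lf) ^ 2 = 1 / (2 * Lf) := by
    field_simp; ring
  rw [hval]
  nlinarith [h1, h2, e1, e2, e3, e4, hcoef]

set_option maxHeartbeats 1000000 in
lemma dsc_aux_comb (n m : ℕ) (f : EuclideanSpace ℝ (Fin n) → ℝ) (Lf μf : ℝ)
    (hLf : 0 < Lf) (hμf : 0 < μf)
    (hdiff : Differentiable ℝ f)
    (hsmooth : ∀ x x', ‖gradient f x - gradient f x'‖ ≤ Lf * ‖x - x'‖)
    (hsc : ConvexOn ℝ Set.univ (fun x => f x - μf / 2 * ‖x‖ ^ 2))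
    (A : EuclideanSpace ℝ (Fin n) →ₗ[ℝ] EuclideanSpace ℝ (Fin m))
    (b : EuclideanSpace ℝ (Fin m))
    (σmin : ℝ) (hσ : 0 < σmin)
    (hA : ∀ lam : EuclideanSpace ℝ (Fin m), σmin * ‖lam‖ ≤ ‖LinearMap.adjoint A lam‖)
    (fstar : EuclideanSpace ℝ (Fin n) → ℝ)
    (hfstar : ∀ y, IsLUB (Set.range fun x => ⟪x, y⟫ - f x) (fstar y))
    (lam lam' : EuclideanSpace ℝ (Fin m)) (a c : ℝ)
    (ha : 0 ≤ a) (hc : 0 ≤ c) (hac : a + c = 1) :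
    a * (-(fstar (-(LinearMap.adjoint A lam))) - ⟪b, lam⟫)
      + c * (-(fstar (-(LinearMap.adjoint A lam'))) - ⟪b, lam'⟫)
      + σmin ^ 2 / Lf / 2 * (a * c) * ‖lam - lam'‖ ^ 2
    ≤ -(fstar (-(LinearMap.adjoint A (a • lam + c • lam'))))
      - ⟪b, a • lam + c • lam'⟫ := by
  set T := LinearMap.adjoint A with hT
  set lam'' : EuclideanSpace ℝ (Fin m) := a • lam + c • lam' with hlam''
  set yl : EuclideanSpace ℝ (Fin n) := -(T lam) with hyl
  set yl' : EuclideanSpace ℝ (Fin n) := -(T lam') with hyl'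
  set y'' : EuclideanSpace ℝ (Fin n) := -(T lam'') with hy''
  obtain ⟨x'', hx''⟩ := strong_subgrad f Lf μf hLf hμf hdiff hsmooth hsc fstar hfstar y''
  have hTl : T lam'' = a • T lam + c • T lam' := by
    rw [hlam'', map_add, map_smul, map_smul]
  have i1 : yl - y'' = c • (T lam' - T lam) := by
    rw [hyl, hy'', hTl]
    have h1 : (1 : ℝ) - a = c := by linarith
    rw [smul_sub]
    rw [show -T lam - -(a • T lam + c • T lam') = (a - 1) • T lam + c • T lam' by
      rw [sub_smul, one_smul]; abel]
    rw [show a - 1 = -c by linarith]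
    rw [neg_smul]; abel
  have i2 : yl' - y'' = a • (T lam - T lam') := by
    rw [hyl', hy'', hTl]
    rw [smul_sub]
    rw [show -T lam' - -(a • T lam + c • T lam') = a • T lam + (c - 1) • T lam' by
      rw [sub_smul, one_smul]; abel]
    rw [show c - 1 = -a by linarith]
    rw [neg_smul]; abel
  set Δ : EuclideanSpace ℝ (Fin m) := lam - lam' with hΔ
  have hTsub : T lam - T lam' = T Δ := (map_sub T lam lam').symm
  have norm1 : ‖yl - y''‖ = c * ‖T Δ‖ := by
    rw [i1, norm_smul, Real.norm_eq_abs, abs_of_nonneg hc, ← norm_neg, neg_sub, hTsub]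
  have norm2 : ‖yl' - y''‖ = a * ‖T Δ‖ := by
    rw [i2, norm_smul, Real.norm_eq_abs, abs_of_nonneg ha, hTsub]
  have inner0 : a * ⟪x'', yl - y''⟫ + c * ⟪x'', yl' - y''⟫ = 0 := by
    rw [← real_inner_smul_right, ← real_inner_smul_right, ← inner_add_right]
    rw [i1, i2, smul_smul, smul_smul]
    rw [show (a * c) • (T lam' - T lam) + (c * a) • (T lam - T lam')
        = (0 : EuclideanSpace ℝ (Fin n)) by
      rw [mul_comm c a, smul_sub, smul_sub]; abel]
    exact inner_zero_right _
  have hσΔ : σmin ^ 2 * ‖Δ‖ ^ 2 ≤ ‖T Δ‖ ^ 2 := by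
    have h0 : 0 ≤ σmin * ‖Δ‖ := by positivity
    have hp := pow_le_pow_left₀ h0 (hA Δ) 2
    rw [mul_pow] at hp
    exact hp
  have h1 := hx'' yl
  have h2 := hx'' yl'
  have ha1 := mul_le_mul_of_nonneg_left h1 ha
  have hc2 := mul_le_mul_of_nonneg_left h2 hc
  have hb : ⟪b, lam''⟫ = a * ⟪b, lam⟫ + c * ⟪b, lam'⟫ := by
    rw [hlam'', inner_add_right, real_inner_smul_right, real_inner_smul_right]
  have hN1 : ‖yl - y''‖ ^ 2 = c ^ 2 * ‖T Δ‖ ^ 2 := by rw [norm1]; ring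
  have hN2 : ‖yl' - y''‖ ^ 2 = a ^ 2 * ‖T Δ‖ ^ 2 := by rw [norm2]; ring
  rw [hN1] at ha1
  rw [hN2] at hc2
  rw [hb]
  have hkey : fstar y'' + σmin ^ 2 / Lf / 2 * (a * c) * ‖Δ‖ ^ 2
      ≤ a * fstar yl + c * fstar yl' := by
    set N : ℝ := ‖T Δ‖ ^ 2 with hN
    set S : ℝ := fstar y'' with hS
    have hsum := add_le_add ha1 hc2
    have hPP : 0 ≤ 1 / (2 * Lf) * (a * c * (N - σmin ^ 2 * ‖Δ‖ ^ 2)) := by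
      have hP : 0 ≤ a * c * (N - σmin ^ 2 * ‖Δ‖ ^ 2) :=
        mul_nonneg (mul_nonneg ha hc) (sub_nonneg.2 hσΔ)
      exact mul_nonneg (by positivity) hP
    have hfinal : σmin ^ 2 / Lf / 2 * (a * c) * ‖Δ‖ ^ 2 ≤ 1 / (2 * Lf) * (a * c * N) := by
      have hcoef : σmin ^ 2 / Lf / 2 = 1 / (2 * Lf) * σmin ^ 2 := by
        field_simp
      rw [hcoef]
      linarith [hPP]
    have hSS : a * S + c * S = S := by
      have h1 : a * S + c * S = (a + c) * S := by ring
      rw [h1, hac, one_mul]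
    have hacn : a * c ^ 2 + c * a ^ 2 = a * c := by
      have h1 : a * c ^ 2 + c * a ^ 2 = a * c * (a + c) := by ring
      rw [h1, hac, mul_one]
    have hmono : 1 / (2 * Lf) * (a * (c ^ 2 * N)) + 1 / (2 * Lf) * (c * (a ^ 2 * N))
        = 1 / (2 * Lf) * (a * c * N) := by
      have h1 : 1 / (2 * Lf) * (a * (c ^ 2 * N)) + 1 / (2 * Lf) * (c * (a ^ 2 * N))
          = 1 / (2 * Lf) * ((a * c ^ 2 + c * a ^ 2) * N) := by ring
      rw [h1, hacn]
    linarith [hsum, inner0, hfinal, hSS, hmono]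
  linarith [hkey]

end DscAux

/-- If `f : ℝ^n → ℝ` is differentiable, `L_f`-smooth and `μ_f`-strongly convex, `A` has
minimum singular value `σ_min > 0` (i.e. `σ_min‖λ‖ ≤ ‖Aᵀλ‖` for all `λ`), and
`h : ℝ^m → ℝ ∪ {+∞}` is proper closed convex, then the dual function
`Φ(λ) := -f*(-Aᵀλ) - ⟨b,λ⟩ - h*(λ)` is `(σ_min²/L_f)`-strongly concave. -/
theorem dual_strongly_concave
    (n m : ℕ) (f : EuclideanSpace ℝ (Fin n) → ℝ) (Lf μf : ℝ)
    (hLf : 0 < Lf) (hμf : 0 < μf)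
    (hdiff : Differentiable ℝ f)
    (hsmooth : ∀ x x', ‖gradient f x - gradient f x'‖ ≤ Lf * ‖x - x'‖)
    (hsc : ConvexOn ℝ Set.univ (fun x => f x - μf / 2 * ‖x‖ ^ 2))
    (A : EuclideanSpace ℝ (Fin n) →ₗ[ℝ] EuclideanSpace ℝ (Fin m))
    (b : EuclideanSpace ℝ (Fin m))
    (σmin : ℝ) (hσ : 0 < σmin)
    (hA : ∀ lam : EuclideanSpace ℝ (Fin m), σmin * ‖lam‖ ≤ ‖LinearMap.adjoint A lam‖)
    (h : EuclideanSpace ℝ (Fin m) → EReal)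
    (hproper₁ : ∀ z, h z ≠ ⊥) (hproper₂ : ∃ z, h z ≠ ⊤)
    (hclosed : LowerSemicontinuous h)
    (hconvex : ∀ z z' (a c : ℝ), 0 ≤ a → 0 ≤ c → a + c = 1 →
      h (a • z + c • z') ≤ (a : EReal) * h z + (c : EReal) * h z')
    (fstar : EuclideanSpace ℝ (Fin n) → ℝ)
    (hfstar : ∀ y, IsLUB (Set.range fun x => ⟪x, y⟫ - f x) (fstar y))
    (hstar : EuclideanSpace ℝ (Fin m) → EReal)
    (hhstar : ∀ y, hstar y = ⨆ z, ((⟪z, y⟫ : ℝ) : EReal) - h z)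
    (Φ : EuclideanSpace ℝ (Fin m) → EReal)
    (hΦ : ∀ lam, Φ lam =
      ((-(fstar (-(LinearMap.adjoint A lam))) - ⟪b, lam⟫ : ℝ) : EReal) - hstar lam) :
    ∀ lam lam' (a c : ℝ), 0 ≤ a → 0 ≤ c → a + c = 1 →
      (a : EReal) * Φ lam + (c : EReal) * Φ lam' +
          ((σmin ^ 2 / Lf / 2 * (a * c) * ‖lam - lam'‖ ^ 2 : ℝ) : EReal)
        ≤ Φ (a • lam + c • lam') := by
  -- hstar is never ⊥
  obtain ⟨z₀, hz₀top⟩ := hproper₂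
  obtain ⟨t₀, ht₀⟩ : ∃ t : ℝ, h z₀ = (t : EReal) := by
    lift h z₀ to ℝ using ⟨hz₀top, hproper₁ z₀⟩ with t ht
    exact ⟨t, rfl⟩
  have hbot : ∀ l, ((⟪z₀, l⟫ - t₀ : ℝ) : EReal) ≤ hstar l := by
    intro l
    rw [hhstar l]
    have := le_iSup (fun z => ((⟪z, l⟫ : ℝ) : EReal) - h z) z₀
    rwa [ht₀, ← EReal.coe_sub] at this
  have hstar_ne_bot : ∀ l, hstar l ≠ ⊥ := by
    intro l heq
    have := hbot l
    rw [heq, le_bot_iff] at this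
    exact EReal.coe_ne_bot _ this
  intro lam lam' a c ha hc hac
  rcases ha.eq_or_lt with h0 | hapos
  · -- a = 0, c = 1
    have hc1 : c = 1 := by linarith
    subst hc1
    rw [← h0]
    simp only [EReal.coe_zero, EReal.coe_one, EReal.zero_mul, one_mul, zero_smul, one_smul,
      zero_add, zero_mul, mul_zero]
    simp
  rcases hc.eq_or_lt with h0 | hcpos
  · -- c = 0, a = 1
    have ha1 : a = 1 := by linarith
    subst ha1
    rw [← h0]
    simp only [EReal.coe_zero, EReal.coe_one, EReal.zero_mul, one_mul, zero_smul, one_smul,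
      add_zero, zero_mul, mul_zero]
    simp
  -- both positive
  by_cases htop1 : hstar lam = ⊤
  · rw [hΦ lam, htop1]
    have hb1 : ((-(fstar (-(LinearMap.adjoint A lam))) - ⟪b, lam⟫ : ℝ) : EReal) - ⊤ = ⊥ := by
      simp [sub_eq_add_neg]
    rw [hb1, EReal.coe_mul_bot_of_pos hapos, EReal.bot_add, EReal.bot_add]
    exact bot_le
  by_cases htop2 : hstar lam' = ⊤
  · rw [hΦ lam', htop2]
    have hb1 : ((-(fstar (-(LinearMap.adjoint A lam'))) - ⟪b, lam'⟫ : ℝ) : EReal) - ⊤ = ⊥ := by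
      simp [sub_eq_add_neg]
    rw [hb1, EReal.coe_mul_bot_of_pos hcpos, EReal.add_bot, EReal.bot_add]
    exact bot_le
  obtain ⟨p, hp⟩ : ∃ t : ℝ, hstar lam = (t : EReal) := by
    lift hstar lam to ℝ using ⟨htop1, hstar_ne_bot lam⟩ with t ht
    exact ⟨t, rfl⟩
  obtain ⟨q, hq⟩ : ∃ t : ℝ, hstar lam' = (t : EReal) := by
    lift hstar lam' to ℝ using ⟨htop2, hstar_ne_bot lam'⟩ with t ht
    exact ⟨t, rfl⟩
  -- bound each term of hstar lam
  have hterm : ∀ (z : EuclideanSpace ℝ (Fin m)) (l : EuclideanSpace ℝ (Fin m)) (r : ℝ),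
      hstar l = (r : EReal) → ((⟪z, l⟫ : ℝ) : EReal) - h z ≤ (r : EReal) := by
    intro z l r hr
    have := le_iSup (fun z => ((⟪z, l⟫ : ℝ) : EReal) - h z) z
    rw [← hhstar l, hr] at this
    exact this
  -- convexity of hstar
  have hconv : hstar (a • lam + c • lam') ≤ ((a * p + c * q : ℝ) : EReal) := by
    rw [hhstar]
    apply iSup_le
    intro z
    by_cases hz : h z = ⊤
    · rw [hz]
      simp [sub_eq_add_neg]
    obtain ⟨t, ht⟩ : ∃ t : ℝ, h z = (t : EReal) := by
      lift h z to ℝ using ⟨hz, hproper₁ z⟩ with t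
      exact ⟨t, rfl⟩
    have h1 := hterm z lam p hp
    have h2 := hterm z lam' q hq
    rw [ht, ← EReal.coe_sub, EReal.coe_le_coe_iff] at h1 h2
    rw [ht, ← EReal.coe_sub, EReal.coe_le_coe_iff]
    have hin : ⟪z, a • lam + c • lam'⟫ = a * ⟪z, lam⟫ + c * ⟪z, lam'⟫ := by
      rw [inner_add_right, real_inner_smul_right, real_inner_smul_right]
    have key : a * (⟪z, lam⟫ - t) + c * (⟪z, lam'⟫ - t)
        = (a * ⟪z, lam⟫ + c * ⟪z, lam'⟫) - (a + c) * t := by ring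
    rw [hac, one_mul] at key
    have hm1 := mul_le_mul_of_nonneg_left h1 ha
    have hm2 := mul_le_mul_of_nonneg_left h2 hc
    rw [hin]
    linarith [hm1, hm2, key]
  obtain ⟨s, hs, hsle⟩ : ∃ s : ℝ, hstar (a • lam + c • lam') = (s : EReal) ∧
      s ≤ a * p + c * q := by
    have hne : hstar (a • lam + c • lam') ≠ ⊤ := by
      intro heq
      rw [heq] at hconv
      exact (EReal.coe_lt_top _).not_ge hconv
    obtain ⟨s, hs⟩ : ∃ s : ℝ, hstar (a • lam + c • lam') = (s : EReal) := by
      lift hstar (a • lam + c • lam') to ℝ using ⟨hne, hstar_ne_bot _⟩ with s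
      exact ⟨s, rfl⟩
    refine ⟨s, hs, ?_⟩
    rw [hs, EReal.coe_le_coe_iff] at hconv
    exact hconv
  -- rewrite everything as real coercions
  rw [hΦ lam, hΦ lam', hΦ (a • lam + c • lam'), hp, hq, hs,
    ← EReal.coe_sub, ← EReal.coe_sub, ← EReal.coe_sub,
    ← EReal.coe_mul, ← EReal.coe_mul, ← EReal.coe_add, ← EReal.coe_add,
    EReal.coe_le_coe_iff]
  have hcomb := dsc_aux_comb n m f Lf μf hLf hμf hdiff hsmooth hsc A b σmin hσ hA
    fstar hfstar lam lam' a c ha hc hac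
  have hm1 := mul_le_mul_of_nonneg_left hsle (le_of_lt (by linarith : (0:ℝ) < 1))
  nlinarith [hcomb, hsle]
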